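/- Let K ≥ 2 and n ≥ 1. Let B_1, …, B_K be i.i.d. Bernoulli(1/2) random variables, and let X, X_1, …, X_n be i.i.d. uniform on {1, …, K}, independent of (B_1, …, B_K). Set S = B_X and S_i = B_{X_i} for i = 1, …, n. Then for every function f_n : {1, …, K} × ({1, …, K} × {0,1})^n → {0,1}, the misclassification probability satisfies P( f_n(X, (X_1,S_1), …, (X_n,S_n)) ≠ S ) ≥ (1/2)(1 − 1/K)^n. -/

import Mathlib

open MeasureTheory ENNReal

open Finset Function


lemma ite_one_and {p q : Prop} [Decidable p] [Decidable q] :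
    (if p ∧ q then (1:ℕ) else 0) = (if p then 1 else 0) * (if q then 1 else 0) := by
  by_cases hp : p <;> by_cases hq : q <;> simp [hp, hq]

lemma card_eval_false {K : ℕ} (x : Fin K) :
    (Finset.univ.filter fun b : Fin K → Bool => b x = false).card = 2 ^ (K - 1) := by
  classical
  have h2 : (Finset.univ.filter fun b : Fin K → Bool => b x = false).card
      = (Finset.univ.filter fun b : Fin K → Bool => ¬ (b x = false)).card := by
    refine Finset.card_bij' (fun b _ => Function.update b x true)
      (fun b _ => Function.update b x false) ?_ ?_ ?_ ?_
    · intro b hb; simp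
    · intro b hb; simp
    · intro b hb
      simp only [Finset.mem_filter, Finset.mem_univ, true_and] at hb
      simp [Function.update_idem, Function.update_eq_self_iff, hb]
    · intro b hb
      simp only [Finset.mem_filter, Finset.mem_univ, true_and, Bool.not_eq_false] at hb
      simp [Function.update_idem, Function.update_eq_self_iff, hb]
  have h3 := Finset.card_filter_add_card_filter_not
    (s := (Finset.univ : Finset (Fin K → Bool))) (p := fun b => b x = false)
  have hcu : (Finset.univ : Finset (Fin K → Bool)).card = 2 ^ K := by
    simp [Finset.card_univ]
  rw [hcu] at h3
  have hK : K - 1 + 1 = K := Nat.succ_pred_eq_of_pos x.pos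
  have h4 : 2 ^ K = 2 ^ (K - 1) * 2 := by conv_lhs => rw [← hK, pow_succ]
  rw [← h2, h4] at h3
  generalize hc : (Finset.univ.filter fun b : Fin K → Bool => b x = false).card = c at h3 ⊢
  clear hc h2 hcu
  omega

lemma card_avoid {K n : ℕ} (x : Fin K) :
    (Finset.univ.filter fun xs : Fin n → Fin K => ∀ i, xs i ≠ x).card = (K - 1) ^ n := by
  classical
  have : (Finset.univ.filter fun xs : Fin n → Fin K => ∀ i, xs i ≠ x)
      = Fintype.piFinset fun _ : Fin n => Finset.univ.erase x := by
    ext xs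
    simp [Fintype.mem_piFinset]
  rw [this, Fintype.card_piFinset]
  simp [Finset.card_erase_of_mem]

lemma card_lower {K n : ℕ} (fn : Fin K × (Fin n → Fin K × Bool) → Bool) :
    K * (2 ^ (K - 1) * (K - 1) ^ n) ≤
      (Finset.univ.filter fun ω : (Fin K → Bool) × Fin K × (Fin n → Fin K) =>
        fn (ω.2.1, fun i => (ω.2.2 i, ω.1 (ω.2.2 i))) ≠ ω.1 ω.2.1).card := by
  classical
  set A' := Finset.univ.filter fun ω : (Fin K → Bool) × Fin K × (Fin n → Fin K) =>
      fn (ω.2.1, fun i => (ω.2.2 i, ω.1 (ω.2.2 i))) ≠ ω.1 ω.2.1 with hA'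
  set DomF := Finset.univ.filter fun ω : (Fin K → Bool) × Fin K × (Fin n → Fin K) =>
      ω.1 ω.2.1 = false ∧ ∀ i, ω.2.2 i ≠ ω.2.1 with hDomF
  have hcard : DomF.card = K * (2 ^ (K - 1) * (K - 1) ^ n) := by
    rw [hDomF, Finset.card_filter]
    simp only [Fintype.sum_prod_type]
    rw [Finset.sum_comm]
    have : ∀ x : Fin K,
        (∑ b : Fin K → Bool, ∑ xs : Fin n → Fin K,
          if (b x = false ∧ ∀ i, xs i ≠ x) then (1:ℕ) else 0)
        = 2 ^ (K - 1) * (K - 1) ^ n := by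
      intro x
      simp only [ite_one_and]
      rw [← Finset.sum_mul_sum]
      rw [← Finset.card_filter, ← Finset.card_filter, card_eval_false x, card_avoid x]
    simp only [this, Finset.sum_const, Finset.card_univ, Fintype.card_fin, smul_eq_mul]
  rw [← hcard]
  apply Finset.card_le_card_of_injOn (fun ω =>
    (if fn (ω.2.1, fun i => (ω.2.2 i, ω.1 (ω.2.2 i))) ≠ ω.1 ω.2.1 then ω.1
      else Function.update ω.1 ω.2.1 true, ω.2.1, ω.2.2))
  · rintro ⟨b, x, xs⟩ hω
    simp only [hDomF, Finset.coe_filter, Set.mem_setOf_eq, Finset.mem_univ, true_and] at hω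
    obtain ⟨hb, hxs⟩ := hω
    by_cases herr : fn (x, fun i => (xs i, b (xs i))) ≠ b x
    · dsimp only
      rw [if_pos herr]
      simp only [hA', Finset.coe_filter, Set.mem_setOf_eq, Finset.mem_univ, true_and]
      exact herr
    · dsimp only
      rw [if_neg herr]
      simp only [hA', Finset.coe_filter, Set.mem_setOf_eq, Finset.mem_univ, true_and]
      have hupd : (fun i => (xs i, Function.update b x true (xs i)))
          = fun i => (xs i, b (xs i)) := by
        funext i
        rw [Function.update_of_ne (hxs i)]
      simp only [hupd, Function.update_self]
      push_neg at herr
      rw [herr, hb]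
      simp
  · rintro ⟨b₁, x₁, xs₁⟩ h₁ ⟨b₂, x₂, xs₂⟩ h₂ heq
    simp only [hDomF, Finset.coe_filter, Set.mem_setOf_eq, Finset.mem_univ, true_and] at h₁ h₂
    obtain ⟨hb₁, -⟩ := h₁
    obtain ⟨hb₂, -⟩ := h₂
    simp only [Prod.mk.injEq] at heq
    obtain ⟨hc, hx, hxs⟩ := heq
    subst hx hxs
    have key : ∀ (b : Fin K → Bool) (p : Prop) [Decidable p], b x₁ = false →
        Function.update (if p then b else Function.update b x₁ true) x₁ false = b := by
      intro b p _ hb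
      split_ifs with h
      · simp [Function.update_eq_self_iff, hb]
      · simp [Function.update_idem, Function.update_eq_self_iff, hb]
    have : b₁ = b₂ := by
      have e₁ := key b₁ (fn (x₁, fun i => (xs₁ i, b₁ (xs₁ i))) ≠ b₁ x₁) hb₁
      have e₂ := key b₂ (fn (x₁, fun i => (xs₁ i, b₂ (xs₁ i))) ≠ b₂ x₁) hb₂
      rw [← e₁, ← e₂, hc]
    simp [this]


/-- Let `B_1, …, B_K` be i.i.d. Bernoulli(1/2) labels, and let
`X, X_1, …, X_n` be i.i.d. uniform on `{1, …, K}`, independent of the labels; set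
`S = B_X` and `S_i = B_{X_i}`. Then every predictor
`f_n : {1..K} × ({1..K} × {0,1})^n → {0,1}` misclassifies the fresh point with
probability at least `(1/2)(1 − 1/K)^n`. -/
theorem statement18 (K n : ℕ) (hK : 2 ≤ K) (hn : 1 ≤ n)
    (fn : Fin K × (Fin n → Fin K × Bool) → Bool) :
    (1 / 2 : ℝ) * (1 - 1 / (K : ℝ)) ^ n ≤
      (((Measure.pi fun _ : Fin K => ((2 : ℝ≥0∞)⁻¹ • Measure.count : Measure Bool)).prod
            (((K : ℝ≥0∞)⁻¹ • Measure.count : Measure (Fin K)).prod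
              (Measure.pi fun _ : Fin n =>
                ((K : ℝ≥0∞)⁻¹ • Measure.count : Measure (Fin K)))))
          {ω : (Fin K → Bool) × Fin K × (Fin n → Fin K) |
            fn (ω.2.1, fun i => (ω.2.2 i, ω.1 (ω.2.2 i))) ≠ ω.1 ω.2.1}).toReal := by
  classical
  have hK0 : (K : ℝ≥0∞) ≠ 0 := by
    simp; omega
  haveI hfin1 : IsFiniteMeasure ((2 : ℝ≥0∞)⁻¹ • Measure.count : Measure Bool) := by
    constructor
    rw [Measure.smul_apply, Measure.count_univ, smul_eq_mul]
    exact ENNReal.mul_lt_top (by simp) (by simp)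
  haveI hfin2 : IsFiniteMeasure ((K : ℝ≥0∞)⁻¹ • Measure.count : Measure (Fin K)) := by
    constructor
    rw [Measure.smul_apply, Measure.count_univ, smul_eq_mul]
    exact ENNReal.mul_lt_top (by simp; omega) (by simp)
  set w : ℝ≥0∞ := 2⁻¹ ^ K * ((K : ℝ≥0∞)⁻¹ * ((K : ℝ≥0∞)⁻¹) ^ n) with hw
  set μ := ((Measure.pi fun _ : Fin K => ((2 : ℝ≥0∞)⁻¹ • Measure.count : Measure Bool)).prod
            (((K : ℝ≥0∞)⁻¹ • Measure.count : Measure (Fin K)).prod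
              (Measure.pi fun _ : Fin n =>
                ((K : ℝ≥0∞)⁻¹ • Measure.count : Measure (Fin K))))) with hμ
  have hsing : ∀ ω : (Fin K → Bool) × Fin K × (Fin n → Fin K), μ {ω} = w := by
    rintro ⟨b, x, xs⟩
    rw [hμ, show ({(b, x, xs)} : Set ((Fin K → Bool) × Fin K × (Fin n → Fin K)))
        = {b} ×ˢ ({x} ×ˢ {xs}) by simp,
      Measure.prod_prod, Measure.prod_prod]
    have h1 : (Measure.pi fun _ : Fin K => ((2 : ℝ≥0∞)⁻¹ • Measure.count : Measure Bool))
        {b} = 2⁻¹ ^ K := by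
      rw [← Set.univ_pi_singleton b, Measure.pi_pi]
      simp [Measure.count_singleton]
    have h2 : (Measure.pi fun _ : Fin n => ((K : ℝ≥0∞)⁻¹ • Measure.count : Measure (Fin K)))
        {xs} = ((K : ℝ≥0∞)⁻¹) ^ n := by
      rw [← Set.univ_pi_singleton xs, Measure.pi_pi]
      simp [Measure.count_singleton]
    rw [h1, h2, hw]
    simp [Measure.count_singleton]
  have hμcount : μ = w • Measure.count := by
    apply Measure.ext_of_singleton
    intro ω
    rw [hsing ω, Measure.smul_apply, Measure.count_singleton, smul_eq_mul, mul_one]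
  set A' := Finset.univ.filter fun ω : (Fin K → Bool) × Fin K × (Fin n → Fin K) =>
      fn (ω.2.1, fun i => (ω.2.2 i, ω.1 (ω.2.2 i))) ≠ ω.1 ω.2.1 with hA'
  have hAset : {ω : (Fin K → Bool) × Fin K × (Fin n → Fin K) |
      fn (ω.2.1, fun i => (ω.2.2 i, ω.1 (ω.2.2 i))) ≠ ω.1 ω.2.1} = ↑A' := by
    ext ω; simp only [hA', Finset.coe_filter, Finset.mem_univ, true_and]
  rw [hμcount, hAset, Measure.smul_apply, Measure.count_apply_finset, smul_eq_mul]
  have hwR : w.toReal = (2 : ℝ)⁻¹ ^ K * ((K : ℝ)⁻¹ * ((K : ℝ)⁻¹) ^ n) := by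
    simp [hw, ENNReal.toReal_mul, ENNReal.toReal_pow, ENNReal.toReal_inv]
  rw [ENNReal.toReal_mul, hwR]
  rw [show ((A'.card : ℝ≥0∞)).toReal = (A'.card : ℝ) by simp]
  have hcardleN : K * (2 ^ (K - 1) * (K - 1) ^ n) ≤ A'.card := card_lower fn
  have hcardle : ((K * (2 ^ (K - 1) * (K - 1) ^ n) : ℕ) : ℝ) ≤ (A'.card : ℝ) :=
    Nat.cast_le.mpr hcardleN
  have hKR : (0:ℝ) < (K : ℝ) := by
    have : 0 < K := by omega
    exact_mod_cast this
  calc (1 / 2 : ℝ) * (1 - 1 / (K : ℝ)) ^ n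
      = (2 : ℝ)⁻¹ ^ K * ((K : ℝ)⁻¹ * ((K : ℝ)⁻¹) ^ n)
        * ((K * (2 ^ (K - 1) * (K - 1) ^ n) : ℕ) : ℝ) := by
        obtain ⟨m, rfl⟩ : ∃ m, K = m + 1 := ⟨K - 1, by omega⟩
        have hm : m + 1 - 1 = m := by omega
        rw [hm]
        push_cast [Nat.cast_sub (by omega : 1 ≤ m + 1)]
        have hk : ((m : ℝ) + 1) ≠ 0 := by positivity
        field_simp
        rw [add_sub_cancel_right, div_pow, one_div_pow, one_div_pow]; field_simp; ring
    _ ≤ (2 : ℝ)⁻¹ ^ K * ((K : ℝ)⁻¹ * ((K : ℝ)⁻¹) ^ n) * (A'.card : ℝ) := by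
        apply mul_le_mul_of_nonneg_left hcardle
        positivity
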